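/- For θ ∈ ℝ define the diagonal real 3×3 matrix ω(θ) = diag(8(1 + cos θ)², 8(1 + cos θ)², 64·cos²θ). Then for every θ ∈ (0, π/2), the entrywise derivative ω′(θ) is a negative definite matrix. -/

import Mathlib

open scoped Matrix

/-- A real `d × d` matrix is negative definite if it is symmetric and
`xᵀ M x < 0` for all nonzero `x ∈ ℝ^d`. -/
def Matrix.NegDef {d : ℕ} (M : Matrix (Fin d) (Fin d) ℝ) : Prop :=
  M.IsSymm ∧ ∀ x : Fin d → ℝ, x ≠ 0 → x ⬝ᵥ M.mulVec x < 0

/-- The Gram matrix of the period-lattice generators of the idealized tilt model of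
cristobalite with tilt angle `θ`. -/
noncomputable def cristobaliteGram (θ : ℝ) : Matrix (Fin 3) (Fin 3) ℝ :=
  Matrix.diagonal
    ![8 * (1 + Real.cos θ) ^ 2, 8 * (1 + Real.cos θ) ^ 2, 64 * Real.cos θ ^ 2]

/-- The entrywise derivative of the cristobalite Gram curve `ω(θ)` is
negative definite for every `θ ∈ (0, π/2)`. -/
theorem stmt_14 :
    ∀ θ ∈ Set.Ioo 0 (Real.pi / 2),
      Matrix.NegDef (Matrix.of fun i j => deriv (fun t => cristobaliteGram t i j) θ) := by
  rintro θ ⟨h0, h2⟩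
  have hpi := Real.pi_pos
  have hs : 0 < Real.sin θ := Real.sin_pos_of_pos_of_lt_pi h0 (by linarith)
  have hc : 0 < Real.cos θ := Real.cos_pos_of_mem_Ioo ⟨by linarith, h2⟩
  set a : ℝ := -(16 * Real.sin θ * (1 + Real.cos θ)) with ha
  set b : ℝ := -(128 * Real.cos θ * Real.sin θ) with hb
  have ha' : a < 0 := by rw [ha]; nlinarith
  have hb' : b < 0 := by rw [hb]; nlinarith
  have hda : HasDerivAt (fun t => 8 * (1 + Real.cos t) ^ 2) a θ := by
    have := (((Real.hasDerivAt_cos θ).const_add 1).pow 2).const_mul (8 : ℝ)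
    refine this.congr_deriv ?_
    ring
  have hdb : HasDerivAt (fun t => 64 * Real.cos t ^ 2) b θ := by
    have := ((Real.hasDerivAt_cos θ).pow 2).const_mul (64 : ℝ)
    refine this.congr_deriv ?_
    ring
  have hM : (Matrix.of fun i j => deriv (fun t => cristobaliteGram t i j) θ)
      = Matrix.diagonal ![a, a, b] := by
    ext i j
    fin_cases i <;> fin_cases j <;>
      simp [cristobaliteGram, Matrix.diagonal, hda.deriv, hdb.deriv]
  rw [hM]
  refine ⟨Matrix.isSymm_diagonal _, fun x hx => ?_⟩
  have hq : x ⬝ᵥ (Matrix.diagonal ![a, a, b]).mulVec x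
      = a * x 0 ^ 2 + a * x 1 ^ 2 + b * x 2 ^ 2 := by
    simp [dotProduct, Matrix.mulVec_diagonal, Fin.sum_univ_three]
    ring
  rw [hq]
  obtain ⟨i, hi⟩ := Function.ne_iff.mp hx
  have h0' : 0 ≤ x 0 ^ 2 := sq_nonneg _
  have h1' : 0 ≤ x 1 ^ 2 := sq_nonneg _
  have h2' : 0 ≤ x 2 ^ 2 := sq_nonneg _
  have hp := mul_self_pos.mpr hi
  have key : 0 < x 0 * x 0 ∨ 0 < x 1 * x 1 ∨ 0 < x 2 * x 2 := by
    fin_cases i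
    · exact Or.inl (by simpa using hp)
    · exact Or.inr (Or.inl (by simpa using hp))
    · exact Or.inr (Or.inr (by simpa using hp))
  rcases key with h | h | h <;> nlinarith
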